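/- Let ψ ∈ ℂ^N be a unit vector and {ψ⊥_j}_j an orthonormal family in ℂ^N each orthogonal to ψ; let {e_i}_{i=1}^{D} be the standard orthonormal basis of ℂ^D; let G_i, G_{ij}, w ∈ ℂ^M be unit vectors; and let α_i, β_{ij} ∈ ℂ satisfy Σ_i |α_i|² + Σ_{i,j} |β_{ij}|² = 1. Fix an index r and define the unit vectors u := ψ ⊗ w ⊗ e_r and η := Σ_i α_i (ψ ⊗ G_i ⊗ e_i) + Σ_{i,j} β_{ij} (ψ⊥_j ⊗ G_{ij} ⊗ e_i) in ℂ^N ⊗ ℂ^M ⊗ ℂ^D, and the unit vector χ := (e_0 ⊗ u + e_1 ⊗ η)/√2 ∈ ℂ² ⊗ (ℂ^N ⊗ ℂ^M ⊗ ℂ^D). Let Q_r := I ⊗ I ⊗ |e_r⟩⟨e_r| and let P_+ := |+⟩⟨+| be the projection onto + := (e_0 + e_1)/√2 in ℂ². Then ‖(P_+ ⊗ Q_r) χ‖² = ¼ + ¼·(|α_r|² + Σ_j |β_{rj}|²) + ½·Re(α_r · ⟨w, G_r⟩). Consequently, 2·‖(P_+ ⊗ Q_r)χ‖² − ‖(I_2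 ⊗ Q_r)χ‖² = Re(α_r · ⟨w, G_r⟩). -/

import Mathlib

open scoped InnerProductSpace
open scoped ComplexConjugate

noncomputable def tp {N M : ℕ} (x : EuclideanSpace ℂ (Fin N)) (y : EuclideanSpace ℂ (Fin M)) :
    EuclideanSpace ℂ (Fin N × Fin M) := WithLp.toLp 2 (fun q : Fin N × Fin M => x q.1 * y q.2)

lemma tp_apply {N M : ℕ} (x : EuclideanSpace ℂ (Fin N)) (y : EuclideanSpace ℂ (Fin M)) (q) :
    tp x y q = x q.1 * y q.2 := rfl

lemma inner_tp {N M : ℕ} (x x' : EuclideanSpace ℂ (Fin N)) (y y' : EuclideanSpace ℂ (Fin M)) :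
    ⟪tp x y, tp x' y'⟫_ℂ = ⟪x, x'⟫_ℂ * ⟪y, y'⟫_ℂ := by
  simp only [PiLp.inner_apply, RCLike.inner_apply, tp_apply, map_mul, Finset.sum_mul_sum,
    Fintype.sum_prod_type]
  apply Finset.sum_congr rfl; intro n _
  apply Finset.sum_congr rfl; intro m _
  ring

lemma norm_sq_sum' {ι : Type*} [Fintype ι] (x : EuclideanSpace ℂ ι) :
    ‖x‖ ^ 2 = ∑ i, ‖x i‖ ^ 2 := by
  rw [EuclideanSpace.norm_eq, Real.sq_sqrt]; positivity

lemma piLp_sum_apply {ι κ : Type*} [Fintype ι] [Fintype κ] (f : κ → EuclideanSpace ℂ ι) (i : ι) :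
    (∑ k, f k) i = ∑ k, f k i :=
  by rw [WithLp.ofLp_sum]; exact Finset.sum_apply i _ _

/-- for `χ = (e₀ ⊗ u + e₁ ⊗ η)/√2` with `u = ψ ⊗ w ⊗ e_r` and
`η = ∑ i, α i (ψ ⊗ G i ⊗ e i) + ∑ i j, β i j (ψ⊥ j ⊗ G i j ⊗ e i)`, projecting the
first qubit onto `|+⟩` and the last register onto `e_r` yields norm squared
`¼ + ¼(‖α r‖² + ∑ j ‖β r j‖²) + ½ Re(α r ⟨w, G r⟩)`; consequently
`2‖(P₊ ⊗ Q_r)χ‖² - ‖(I₂ ⊗ Q_r)χ‖² = Re(α r ⟨w, G r⟩)`. -/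
theorem swap_test_plus_projection_probability
    (N M D J : ℕ)
    (ψ : EuclideanSpace ℂ (Fin N)) (hψ : ‖ψ‖ = 1)
    (ψperp : Fin J → EuclideanSpace ℂ (Fin N)) (hperp : Orthonormal ℂ ψperp)
    (hperpψ : ∀ j, ⟪ψ, ψperp j⟫_ℂ = 0)
    (G : Fin D → EuclideanSpace ℂ (Fin M)) (hG : ∀ i, ‖G i‖ = 1)
    (Gij : Fin D → Fin J → EuclideanSpace ℂ (Fin M)) (hGij : ∀ i j, ‖Gij i j‖ = 1)
    (w : EuclideanSpace ℂ (Fin M)) (hw : ‖w‖ = 1)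
    (α : Fin D → ℂ) (β : Fin D → Fin J → ℂ)
    (hnorm : ∑ i, ‖α i‖ ^ 2 + ∑ i, ∑ j, ‖β i j‖ ^ 2 = 1)
    (r : Fin D)
    -- `u = ψ ⊗ w ⊗ e_r`
    (u : EuclideanSpace ℂ (Fin N × Fin M × Fin D))
    (hu : ∀ q : Fin N × Fin M × Fin D,
      u q = ψ q.1 * w q.2.1 * (if q.2.2 = r then 1 else 0))
    -- `η = ∑ i, α i (ψ ⊗ G i ⊗ e i) + ∑ i j, β i j (ψ⊥ j ⊗ G i j ⊗ e i)`
    (η : EuclideanSpace ℂ (Fin N × Fin M × Fin D))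
    (hη : ∀ q : Fin N × Fin M × Fin D,
      η q = ∑ i, α i * (ψ q.1 * G i q.2.1 * (if q.2.2 = i then 1 else 0))
          + ∑ i, ∑ j, β i j * (ψperp j q.1 * Gij i j q.2.1 * (if q.2.2 = i then 1 else 0)))
    -- `χ = (e₀ ⊗ u + e₁ ⊗ η)/√2`
    (χ : EuclideanSpace ℂ (Fin 2 × Fin N × Fin M × Fin D))
    (hχ : ∀ p : Fin 2 × Fin N × Fin M × Fin D,
      χ p = ((if p.1 = 0 then u p.2 else 0) + (if p.1 = 1 then η p.2 else 0))
            / (Real.sqrt 2 : ℂ))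
    -- `χr = (I₂ ⊗ I ⊗ I ⊗ |e_r⟩⟨e_r|) χ`
    (χr : EuclideanSpace ℂ (Fin 2 × Fin N × Fin M × Fin D))
    (hχr : ∀ p : Fin 2 × Fin N × Fin M × Fin D,
      χr p = if p.2.2.2 = r then χ p else 0)
    -- `χpr = (|+⟩⟨+| ⊗ I ⊗ I ⊗ |e_r⟩⟨e_r|) χ`
    (χpr : EuclideanSpace ℂ (Fin 2 × Fin N × Fin M × Fin D))
    (hχpr : ∀ p : Fin 2 × Fin N × Fin M × Fin D,
      χpr p = if p.2.2.2 = r then (χ (0, p.2) + χ (1, p.2)) / 2 else 0) :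
    ‖χpr‖ ^ 2 = 1 / 4 + 1 / 4 * (‖α r‖ ^ 2 + ∑ j, ‖β r j‖ ^ 2)
        + 1 / 2 * (α r * ⟪w, G r⟫_ℂ).re ∧
    2 * ‖χpr‖ ^ 2 - ‖χr‖ ^ 2 = (α r * ⟪w, G r⟫_ℂ).re := by
  classical
  have hψψ : ⟪ψ, ψ⟫_ℂ = 1 := by rw [inner_self_eq_norm_sq_to_K, hψ]; norm_num
  have hww : ⟪w, w⟫_ℂ = 1 := by rw [inner_self_eq_norm_sq_to_K, hw]; norm_num
  have hGG : ∀ i, ⟪G i, G i⟫_ℂ = 1 := fun i => by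
    rw [inner_self_eq_norm_sq_to_K, hG]; norm_num
  have hGijGij : ∀ i j, ⟪Gij i j, Gij i j⟫_ℂ = 1 := fun i j => by
    rw [inner_self_eq_norm_sq_to_K, hGij]; norm_num
  have hperpψ' : ∀ j, ⟪ψperp j, ψ⟫_ℂ = 0 := fun j => by
    rw [← inner_conj_symm, hperpψ j, map_zero]
  have hpp : ∀ j j', ⟪ψperp j, ψperp j'⟫_ℂ = if j = j' then 1 else 0 :=
    orthonormal_iff_ite.mp hperp
  set ur : EuclideanSpace ℂ (Fin N × Fin M) := tp ψ w with hurdef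
  set ηr : EuclideanSpace ℂ (Fin N × Fin M) :=
    α r • tp ψ (G r) + ∑ j, β r j • tp (ψperp j) (Gij r j) with hηrdef
  have h1 : ⟪ur, ur⟫_ℂ = 1 := by rw [hurdef, inner_tp, hψψ, hww, one_mul]
  have h2 : ⟪ur, ηr⟫_ℂ = α r * ⟪w, G r⟫_ℂ := by
    rw [hurdef, hηrdef, inner_add_right, inner_smul_right, inner_sum, inner_tp, hψψ, one_mul]
    simp only [inner_smul_right, inner_tp, hperpψ, zero_mul, mul_zero,
      Finset.sum_const_zero, add_zero]
  have h3 : ⟪ηr, ηr⟫_ℂ = ((‖α r‖ ^ 2 + ∑ j, ‖β r j‖ ^ 2 : ℝ) : ℂ) := by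
    rw [hηrdef]
    simp only [inner_add_left, inner_add_right, sum_inner, inner_sum,
      inner_smul_left, inner_smul_right, inner_tp, hψψ, hperpψ, hperpψ', hpp,
      hGG, hGijGij, mul_one, one_mul, zero_mul, mul_zero,
      Finset.sum_const_zero, add_zero, zero_add, mul_ite, ite_mul,
      Finset.sum_ite_eq, Finset.sum_ite_eq', Finset.mem_univ, if_true, RCLike.conj_mul,
      RCLike.mul_conj]
    push_cast
    norm_cast
  have hueq : ∀ (n : Fin N) (m : Fin M), u (n, m, r) = ur (n, m) := by
    intro n m; rw [hu]; simp [hurdef, tp_apply]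
  have hηeq : ∀ (n : Fin N) (m : Fin M), η (n, m, r) = ηr (n, m) := by
    intro n m
    rw [hη, hηrdef]
    rw [PiLp.add_apply, PiLp.smul_apply, piLp_sum_apply, Finset.sum_comm]
    simp only [tp_apply, smul_eq_mul, PiLp.smul_apply, mul_ite, mul_one, mul_zero,
      Finset.sum_ite_eq, Finset.mem_univ, if_true]
  have hχ0 : ∀ q, χ (0, q) = u q / (Real.sqrt 2 : ℂ) := by
    intro q; rw [hχ]; norm_num
  have hχ1 : ∀ q, χ (1, q) = η q / (Real.sqrt 2 : ℂ) := by
    intro q; rw [hχ]; norm_num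
  have hnc : ‖((Real.sqrt 2 : ℝ) : ℂ)‖ = Real.sqrt 2 := by
    simp [Complex.norm_real, Real.norm_eq_abs, abs_of_nonneg (Real.sqrt_nonneg 2)]
  have hdiv2 : ∀ z : ℂ, ‖z / (Real.sqrt 2 : ℂ)‖ ^ 2 = ‖z‖ ^ 2 / 2 := by
    intro z
    rw [norm_div, div_pow, hnc, Real.sq_sqrt (by norm_num : (2:ℝ) ≥ 0)]
  have hdiv8 : ∀ z : ℂ, ‖z / ((Real.sqrt 2 : ℂ) * 2)‖ ^ 2 = ‖z‖ ^ 2 / 8 := by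
    intro z
    rw [norm_div, div_pow, norm_mul, hnc]
    have : (Real.sqrt 2 * ‖(2:ℂ)‖) ^ 2 = 8 := by
      rw [mul_pow, Real.sq_sqrt (by norm_num : (2:ℝ) ≥ 0)]
      norm_num [Complex.norm_ofNat]
    rw [this]
  set S : ℝ := ‖α r‖ ^ 2 + ∑ j, ‖β r j‖ ^ 2 with hS
  set T : ℂ := α r * ⟪w, G r⟫_ℂ with hT
  have hUU : ∑ q : Fin N × Fin M, ‖ur q‖ ^ 2 = 1 := by
    rw [← norm_sq_sum', ← inner_self_eq_norm_sq (𝕜 := ℂ), h1]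
    simp
  have hEE : ∑ q : Fin N × Fin M, ‖ηr q‖ ^ 2 = S := by
    rw [← norm_sq_sum', ← inner_self_eq_norm_sq (𝕜 := ℂ), h3]
    simp
  have hKinner : ⟪ur + ηr, ur + ηr⟫_ℂ = 1 + T + (starRingEnd ℂ) T + ((S : ℝ) : ℂ) := by
    have h2' : ⟪ηr, ur⟫_ℂ = (starRingEnd ℂ) T := by rw [← inner_conj_symm, h2]
    rw [inner_add_add_self, h1, h2, h2', h3]
  have hK : ∑ q : Fin N × Fin M, ‖ur q + ηr q‖ ^ 2 = 1 + S + 2 * T.re := by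
    have : ∀ q : Fin N × Fin M, ur q + ηr q = (ur + ηr) q := fun q => rfl
    simp only [this]
    rw [← norm_sq_sum', ← inner_self_eq_norm_sq (𝕜 := ℂ), hKinner]
    simp [Complex.add_re, Complex.one_re, Complex.conj_re, Complex.ofReal_re]
    ring
  have hApr : ‖χpr‖ ^ 2 = (1 + S + 2 * T.re) / 4 := by
    rw [norm_sq_sum']
    have hterm : ∀ (s : Fin 2) (n : Fin N) (m : Fin M) (d : Fin D),
        ‖χpr (s, n, m, d)‖ ^ 2
          = if d = r then ‖ur (n, m) + ηr (n, m)‖ ^ 2 / 8 else 0 := by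
      intro s n m d
      rw [hχpr]
      by_cases h : d = r
      · subst h
        rw [if_pos rfl, if_pos rfl]
        show ‖(χ (0, (n, m, d)) + χ (1, (n, m, d))) / 2‖ ^ 2 = _
        rw [hχ0, hχ1, hueq, hηeq, ← add_div, div_div, hdiv8]
      · rw [if_neg h, if_neg h, norm_zero]
        norm_num
    calc ∑ p : Fin 2 × Fin N × Fin M × Fin D, ‖χpr p‖ ^ 2
        = ∑ s : Fin 2, ∑ n, ∑ m, ∑ d, ‖χpr (s, n, m, d)‖ ^ 2 := by
          simp only [Fintype.sum_prod_type]
      _ = ∑ _s : Fin 2, ∑ n, ∑ m, ‖ur (n, m) + ηr (n, m)‖ ^ 2 / 8 := by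
          simp only [hterm, Finset.sum_ite_eq', Finset.mem_univ, if_true]
      _ = 2 * ((∑ q : Fin N × Fin M, ‖ur q + ηr q‖ ^ 2) / 8) := by
          simp [Fintype.sum_prod_type, Finset.sum_div, Finset.mul_sum]
      _ = (1 + S + 2 * T.re) / 4 := by rw [hK]; ring
  have hBr : ‖χr‖ ^ 2 = (1 + S) / 2 := by
    rw [norm_sq_sum']
    have hterm0 : ∀ (n : Fin N) (m : Fin M) (d : Fin D),
        ‖χr (0, n, m, d)‖ ^ 2 = if d = r then ‖ur (n, m)‖ ^ 2 / 2 else 0 := by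
      intro n m d
      rw [hχr]
      by_cases h : d = r
      · subst h
        rw [if_pos rfl, if_pos rfl]
        show ‖χ (0, (n, m, d))‖ ^ 2 = _
        rw [hχ0, hueq, hdiv2]
      · rw [if_neg h, if_neg h, norm_zero]
        norm_num
    have hterm1 : ∀ (n : Fin N) (m : Fin M) (d : Fin D),
        ‖χr (1, n, m, d)‖ ^ 2 = if d = r then ‖ηr (n, m)‖ ^ 2 / 2 else 0 := by
      intro n m d
      rw [hχr]
      by_cases h : d = r
      · subst h
        rw [if_pos rfl, if_pos rfl]
        show ‖χ (1, (n, m, d))‖ ^ 2 = _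
        rw [hχ1, hηeq, hdiv2]
      · rw [if_neg h, if_neg h, norm_zero]
        norm_num
    calc ∑ p : Fin 2 × Fin N × Fin M × Fin D, ‖χr p‖ ^ 2
        = ∑ s : Fin 2, ∑ n, ∑ m, ∑ d, ‖χr (s, n, m, d)‖ ^ 2 := by
          simp only [Fintype.sum_prod_type]
      _ = (∑ n, ∑ m, ∑ d, ‖χr (0, n, m, d)‖ ^ 2)
          + (∑ n, ∑ m, ∑ d, ‖χr (1, n, m, d)‖ ^ 2) := by rw [Fin.sum_univ_two]
      _ = (∑ q : Fin N × Fin M, ‖ur q‖ ^ 2) / 2 + (∑ q : Fin N × Fin M, ‖ηr q‖ ^ 2) / 2 := by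
          simp only [hterm0, hterm1, Finset.sum_ite_eq', Finset.mem_univ, if_true]
          simp [Fintype.sum_prod_type, Finset.sum_div]
      _ = (1 + S) / 2 := by rw [hUU, hEE]; ring
  constructor
  · rw [hApr]; ring
  · rw [hApr, hBr]; ring
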